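/- Let G be a graph with at least one edge, and let L_G denote the property of containing a copy of G. If p = p(n) satisfies p = o(n^{−1/ρ^max(G)}), then P(G(n,p) ⊨ L_G) → 0 as n → ∞; if n^{−1/ρ^max(G)} = o(p), then P(G(n,p) ⊨ L_G) → 1 as n → ∞. -/

import Mathlib

open Filter Topology FirstOrder

namespace RandomGraphSpectra

/-- The quantifier depth of a first-order (bounded) formula. -/
def qDepth {L : FirstOrder.Language} {α : Type*} :
    ∀ {n : ℕ}, L.BoundedFormula α n → ℕ
  | _, .falsum => 0
  | _, .equal _ _ => 0
  | _, .rel _ _ => 0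
  | _, .imp f g => max (qDepth f) (qDepth g)
  | _, .all f => qDepth f + 1

/-- A simple graph satisfies a first-order sentence in the language of graphs. -/
def GraphSat {V : Type*} (G : SimpleGraph V) (φ : FirstOrder.Language.graph.Sentence) : Prop :=
  @FirstOrder.Language.Sentence.Realize FirstOrder.Language.graph V G.structure φ

/-- The number of edges of a simple graph. -/
noncomputable def edgeCount {V : Type*} (G : SimpleGraph V) : ℕ := Nat.card G.edgeSet

/-- The probability that `G(n,p)` equals a fixed graph `G` on `{1,…,n}`. -/
noncomputable def weight (n : ℕ) (p : ℝ) (G : SimpleGraph (Fin n)) : ℝ :=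
  p ^ edgeCount G * (1 - p) ^ (n.choose 2 - edgeCount G)

open Classical in
/-- The probability that the Erdős–Rényi random graph `G(n,p)` satisfies a predicate `P`. -/
noncomputable def probPred (n : ℕ) (p : ℝ) (P : SimpleGraph (Fin n) → Prop) : ℝ :=
  ∑ᶠ G : SimpleGraph (Fin n), if P G then weight n p G else 0

/-- The probability that `G(n,p)` satisfies a first-order sentence. -/
noncomputable def probSat (n : ℕ) (p : ℝ) (φ : FirstOrder.Language.graph.Sentence) : ℝ :=
  probPred n p (fun G => GraphSat G φ)

open Classical in
/-- The probability that the pair of independent random graphs `G(n,p), G(m,q)`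
satisfies a predicate `P`. -/
noncomputable def probPred2 (n m : ℕ) (p q : ℝ)
    (P : SimpleGraph (Fin n) → SimpleGraph (Fin m) → Prop) : ℝ :=
  ∑ᶠ G : SimpleGraph (Fin n), ∑ᶠ H : SimpleGraph (Fin m),
    if P G H then weight n p G * weight m q H else 0

/-- The spectrum `S_k^1`: the set of `α ∈ (0,1)` such that for some first-order sentence `φ`
of quantifier depth at most `k`, with `p(n) = n^{-α}`, the probability that `G(n,p(n)) ⊨ φ`
does not tend to `0` and does not tend to `1`. -/
def S1 (k : ℕ) : Set ℝ :=
  {α | α ∈ Set.Ioo (0 : ℝ) 1 ∧ ∃ φ : FirstOrder.Language.graph.Sentence, qDepth φ ≤ k ∧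
    ¬(Tendsto (fun n : ℕ => probSat n ((n : ℝ) ^ (-α)) φ) atTop (nhds 0) ∨
      Tendsto (fun n : ℕ => probSat n ((n : ℝ) ^ (-α)) φ) atTop (nhds 1))}

/-- The spectrum `S_k^2`. -/
def S2 (k : ℕ) : Set ℝ :=
  {α | α ∈ Set.Ioo (0 : ℝ) 1 ∧ ∃ φ : FirstOrder.Language.graph.Sentence, qDepth φ ≤ k ∧
    ¬∃ δ : ℝ, (δ = 0 ∨ δ = 1) ∧ ∃ ε : ℝ, 0 < ε ∧ ∀ p : ℕ → ℝ,
      (∀ n : ℕ, 1 ≤ n → (n : ℝ) ^ (-α - ε) < p n ∧ p n < (n : ℝ) ^ (-α + ε)) →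
      Tendsto (fun n : ℕ => probSat n (p n) φ) atTop (nhds δ)}

/-- `G(n, p(n))` obeys the zero-one `k`-law. -/
def ZeroOneKLaw (k : ℕ) (p : ℕ → ℝ) : Prop :=
  ∀ φ : FirstOrder.Language.graph.Sentence, qDepth φ ≤ k →
    Tendsto (fun n : ℕ => probSat n (p n) φ) atTop (nhds 0) ∨
    Tendsto (fun n : ℕ => probSat n (p n) φ) atTop (nhds 1)

/-- The density `ρ(G) = e(G)/v(G)` of a graph. -/
noncomputable def density {V : Type*} (G : SimpleGraph V) : ℝ :=
  (Nat.card G.edgeSet : ℝ) / (Nat.card V : ℝ)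

/-- A graph is strictly balanced if every proper subgraph with at least one vertex has
strictly smaller density. -/
def StrictlyBalanced {V : Type*} (G : SimpleGraph V) : Prop :=
  ∀ H : G.Subgraph, H ≠ ⊤ → H.verts.Nonempty → density H.coe < density G

/-- `ρ^max(G)`: the maximum density of a subgraph of `G` with at least one vertex. -/
noncomputable def maxDensity {V : Type*} (G : SimpleGraph V) : ℝ :=
  sSup {x : ℝ | ∃ H : G.Subgraph, H.verts.Nonempty ∧ x = density H.coe}

/-- The relative density `ρ(K,H) = e(K,H)/v(K,H)` of a pair of nested subgraphs. -/
noncomputable def pairDensity {V : Type*} {G : SimpleGraph V} (K H : G.Subgraph) : ℝ :=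
  ((Nat.card K.edgeSet : ℝ) - (Nat.card H.edgeSet : ℝ)) /
    ((Nat.card K.verts : ℝ) - (Nat.card H.verts : ℝ))

/-- `ρ^max(G,H)` where the ambient graph `G` corresponds to the top subgraph. -/
noncomputable def maxPairDensity {V : Type*} {G : SimpleGraph V} (H : G.Subgraph) : ℝ :=
  sSup {x : ℝ | ∃ K : G.Subgraph, H < K ∧ x = pairDensity K H}

/-- `f_α(K,H) = v(K,H) - α·e(K,H)`. -/
noncomputable def fAlpha (α : ℝ) {V : Type*} {G : SimpleGraph V} (K H : G.Subgraph) : ℝ :=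
  ((Nat.card K.verts : ℝ) - (Nat.card H.verts : ℝ)) -
    α * ((Nat.card K.edgeSet : ℝ) - (Nat.card H.edgeSet : ℝ))

/-- The pair `(G,H)` is `α`-safe: `f_α(S,H) > 0` for every `S` with `H ⊂ S ⊆ G`. -/
def AlphaSafe (α : ℝ) {V : Type*} (G : SimpleGraph V) (H : G.Subgraph) : Prop :=
  ∀ S : G.Subgraph, H < S → 0 < fAlpha α S H

/-- The pair `(G,H)` is strictly balanced: `ρ(G,H) > ρ(K,H)` for every `H ⊂ K ⊂ G`. -/
def StrictlyBalancedPair {V : Type*} (G : SimpleGraph V) (H : G.Subgraph) : Prop :=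
  ∀ K : G.Subgraph, H < K → K ≠ ⊤ → pairDensity K H < pairDensity (⊤ : G.Subgraph) H

/-- The set `E(K) \ (E(H) ∪ E(K∖H))` is non-empty: `K` has an edge, not an edge of `H`,
with at least one endpoint in `V(H)`. -/
def TouchesRoots {V : Type*} {G : SimpleGraph V} (H K : G.Subgraph) : Prop :=
  ∃ u v : V, K.Adj u v ∧ ¬H.Adj u v ∧ (u ∈ H.verts ∨ v ∈ H.verts)

/-- `e^min(G,H)` (`G` being the top subgraph). -/
noncomputable def eMin {V : Type*} {G : SimpleGraph V} (H : G.Subgraph) : ℕ :=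
  sInf {e : ℕ | ∃ K : G.Subgraph, H < K ∧ TouchesRoots H K ∧
    pairDensity K H = maxPairDensity H ∧ e = Nat.card K.edgeSet - Nat.card H.edgeSet}

/-- `f` realizes a `(G,(r 0,…,r (m-1)))`-extension of the tuple `x` in `Γ`: an injective copy
of the vertex set of `G` sending the roots to `x` and containing all edges of `E(G)∖E(H)`
as edges outside the root-induced subgraph. -/
def IsExtension {W V : Type*} (Gp : SimpleGraph W) (H : Gp.Subgraph) {m : ℕ}
    (r : Fin m → W) (Γ : SimpleGraph V) (x : Fin m → V) (f : W → V) : Prop :=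
  Function.Injective f ∧ (∀ j : Fin m, f (r j) = x j) ∧
    ∀ u v : W, Gp.Adj u v → ¬H.Adj u v →
      Γ.Adj (f u) (f v) ∧ ¬(u ∈ H.verts ∧ v ∈ H.verts)

/-- Strict extension: the implication above is an equivalence. -/
def IsStrictExtension {W V : Type*} (Gp : SimpleGraph W) (H : Gp.Subgraph) {m : ℕ}
    (r : Fin m → W) (Γ : SimpleGraph V) (x : Fin m → V) (f : W → V) : Prop :=
  Function.Injective f ∧ (∀ j : Fin m, f (r j) = x j) ∧
    ∀ u v : W, (Gp.Adj u v ∧ ¬H.Adj u v) ↔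
      (Γ.Adj (f u) (f v) ∧ ¬(u ∈ H.verts ∧ v ∈ H.verts))

/-- The pair of subgraphs of `Γ` with vertex sets `B ⊆ A` is `(K,T)`-maximal in `Γ`
(where `T ⊂ K` has roots enumerated by `s`). -/
def PairMaximal {U V : Type*} (Kp : SimpleGraph U) (T : Kp.Subgraph) {t : ℕ}
    (s : Fin t → U) (Γ : SimpleGraph V) (A B : Set V) : Prop :=
  ∀ tup : Fin t → V, Function.Injective tup → (∀ i, tup i ∈ A) → (∃ i, tup i ∉ B) →
    ¬∃ f : U → V, IsStrictExtension Kp T s Γ tup f ∧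
      (∀ u : U, f u ∈ A → f u ∈ Set.range tup) ∧
      (∀ u : U, f u ∉ Set.range tup → ∀ a ∈ A, a ∉ Set.range tup → ¬Γ.Adj (f u) a)

/-- The subgraph of `Γ` with vertex set `A` is `(K,T)`-maximal in `Γ`. -/
def GraphMaximal {U V : Type*} (Kp : SimpleGraph U) (T : Kp.Subgraph) {t : ℕ}
    (s : Fin t → U) (Γ : SimpleGraph V) (A : Set V) : Prop :=
  ∀ tup : Fin t → V, Function.Injective tup → (∀ i, tup i ∈ A) →
    ¬∃ f : U → V, IsStrictExtension Kp T s Γ tup f ∧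
      (∀ u : U, f u ∈ A → f u ∈ Set.range tup) ∧
      (∀ u : U, f u ∉ Set.range tup → ∀ a ∈ A, a ∉ Set.range tup → ¬Γ.Adj (f u) a)

/-- `Γ` contains a copy of `Gp`. -/
def ContainsCopy {W V : Type*} (Gp : SimpleGraph W) (Γ : SimpleGraph V) : Prop :=
  ∃ f : W → V, Function.Injective f ∧ ∀ u v : W, Gp.Adj u v → Γ.Adj (f u) (f v)

/-- The number of copies of `Gp` in `Γ`: subgraphs of `Γ` isomorphic to `Gp`. -/
noncomputable def numCopies {W V : Type*} (Gp : SimpleGraph W) (Γ : SimpleGraph V) : ℕ :=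
  Nat.card {H : Γ.Subgraph // Nonempty (Gp ≃g H.coe)}

/-- The matched tuples of chosen vertices induce a partial isomorphism. -/
def PartialIso {V W : Type*} (G : SimpleGraph V) (H : SimpleGraph W)
    (xs : List V) (ys : List W) : Prop :=
  ∃ h : xs.length = ys.length,
    ∀ j k : Fin xs.length,
      (xs.get j = xs.get k ↔ ys.get (Fin.cast h j) = ys.get (Fin.cast h k)) ∧
      (G.Adj (xs.get j) (xs.get k) ↔ H.Adj (ys.get (Fin.cast h j)) (ys.get (Fin.cast h k)))

/-- Duplicator has a winning strategy in the remaining `i` rounds of the Ehrenfeucht game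
on `(G,H)` from the position given by the already chosen vertices `xs`, `ys`. -/
def DuplicatorWinsFrom {V W : Type*} (G : SimpleGraph V) (H : SimpleGraph W) :
    ℕ → List V → List W → Prop
  | 0, xs, ys => PartialIso G H xs ys
  | (i + 1), xs, ys =>
      (∀ x : V, ∃ y : W, DuplicatorWinsFrom G H i (x :: xs) (y :: ys)) ∧
      (∀ y : W, ∃ x : V, DuplicatorWinsFrom G H i (x :: xs) (y :: ys))

/-- Duplicator has a winning strategy in the Ehrenfeucht game `EHR(G,H,i)`. -/
def DuplicatorWins {V W : Type*} (G : SimpleGraph V) (H : SimpleGraph W) (i : ℕ) : Prop :=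
  DuplicatorWinsFrom G H i [] []

end RandomGraphSpectra

namespace RandomGraphSpectra

/-- The class `𝒮` of graphs from Section "Properties which imply the existence of
Duplicator's winning strategy" (properties 1)–3)). -/
def GoodGraph (k b : ℕ) (α : ℝ) {V : Type*} (Γ : SimpleGraph V) : Prop :=
  -- 1) no strictly balanced subgraph with at most `2^{2k}·b` vertices and density `> 1/α`
  (∀ A : Γ.Subgraph, Nat.card A.verts ≤ 2 ^ (2 * k) * b → StrictlyBalanced A.coe →
      density A.coe ≤ 1 / α) ∧
  -- 2) strict extensions of α-safe pairs which are `(K₁,K₂)`-maximal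
  (∀ (l h : ℕ) (H₁ : SimpleGraph (Fin l)) (H₂ : H₁.Subgraph) (r : Fin h → Fin l),
      Function.Injective r → Set.range r = H₂.verts →
      l ≤ 2 ^ (2 * k) * b + k * 2 ^ k → AlphaSafe α H₁ H₂ →
      ∀ x : Fin h → V, Function.Injective x →
        ∃ f : Fin l → V, IsStrictExtension H₁ H₂ r Γ x f ∧
          ∀ (u t : ℕ) (K₁ : SimpleGraph (Fin u)) (K₂ : K₁.Subgraph) (s : Fin t → Fin u),
            Function.Injective s → Set.range s = K₂.verts →
            u ≤ 2 ^ k → Nat.card K₂.verts ≤ 2 → fAlpha α (⊤ : K₁.Subgraph) K₂ < 0 →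
            PairMaximal K₁ K₂ s Γ (Set.range f) (Set.range x)) ∧
  -- 3) maximal copies of sparse strictly balanced graphs
  (∀ (w : ℕ) (Hp : SimpleGraph (Fin w)), w ≤ 2 ^ (2 * k) * b → StrictlyBalanced Hp →
      density Hp < 1 / α →
      ∃ f : Fin w → V, Function.Injective f ∧
        (∀ u v : Fin w, Hp.Adj u v → Γ.Adj (f u) (f v)) ∧
        ∀ (u t : ℕ) (K₁ : SimpleGraph (Fin u)) (K₂ : K₁.Subgraph) (s : Fin t → Fin u),
          Function.Injective s → Set.range s = K₂.verts →
          u ≤ 2 ^ k → Nat.card K₂.verts ≤ 2 → fAlpha α (⊤ : K₁.Subgraph) K₂ < 0 →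
          GraphMaximal K₁ K₂ s Γ (Set.range f))

end RandomGraphSpectra

namespace RandomGraphSpectra

open Filter Topology Asymptotics

open Finset in
lemma sum_pow_card {ι : Type*} [DecidableEq ι] (s : Finset ι) (a b : ℝ) :
    ∑ t ∈ s.powerset, a ^ t.card * b ^ (s.card - t.card) = (a + b) ^ s.card := by
  rw [← Finset.prod_const, Finset.prod_add]
  refine Finset.sum_congr rfl fun t ht => ?_
  rw [Finset.mem_powerset] at ht
  rw [Finset.prod_const, Finset.prod_const, Finset.card_sdiff_of_subset ht]

section ProbFramework

open Finset SimpleGraph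
open scoped Classical

variable (n : ℕ) (pr : ℝ)

/-- Finite-sum version of `probPred`. -/
noncomputable def prob' (P : SimpleGraph (Fin n) → Prop) : ℝ :=
  ∑ G : SimpleGraph (Fin n), if P G then weight n pr G else 0

lemma probPred_eq_prob' (P : SimpleGraph (Fin n) → Prop) :
    probPred n pr P = prob' n pr P := by
  classical
  rw [probPred, finsum_eq_sum_of_fintype]
  rfl

variable {n pr}

lemma weight_nonneg (h0 : 0 ≤ pr) (h1 : pr ≤ 1) (G : SimpleGraph (Fin n)) :
    0 ≤ weight n pr G := by
  have : (0:ℝ) ≤ 1 - pr := by linarith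
  exact mul_nonneg (pow_nonneg h0 _) (pow_nonneg this _)

lemma prob'_nonneg (h0 : 0 ≤ pr) (h1 : pr ≤ 1) (P : SimpleGraph (Fin n) → Prop) :
    0 ≤ prob' n pr P := by
  refine Finset.sum_nonneg fun G _ => ?_
  split
  · exact weight_nonneg h0 h1 G
  · exact le_refl 0

lemma prob'_mono {P Q : SimpleGraph (Fin n) → Prop} (h0 : 0 ≤ pr) (h1 : pr ≤ 1)
    (h : ∀ G, P G → Q G) : prob' n pr P ≤ prob' n pr Q := by
  refine Finset.sum_le_sum fun G _ => ?_
  by_cases hP : P G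
  · simp only [hP, if_true, h G hP]
    exact le_refl _
  · simp only [hP, if_false]
    split
    · exact weight_nonneg h0 h1 G
    · exact le_refl 0

lemma prob'_congr {P Q : SimpleGraph (Fin n) → Prop} (h : ∀ G, P G ↔ Q G) :
    prob' n pr P = prob' n pr Q := by
  refine Finset.sum_congr rfl fun G _ => ?_
  rw [h G]

lemma edgeCount_eq_card_edgeFinset (G : SimpleGraph (Fin n)) :
    edgeCount G = G.edgeFinset.card := by
  rw [edgeCount, SimpleGraph.edgeFinset, Set.toFinset_card, Nat.card_eq_fintype_card]

/-- The probability that a fixed set of (non-diagonal) edges is present equals `pr ^ |E|`. -/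
lemma prob'_edges_subset (h0 : 0 ≤ pr) (h1 : pr ≤ 1) (E : Finset (Sym2 (Fin n)))
    (hE : ∀ e ∈ E, ¬ e.IsDiag) :
    prob' n pr (fun G => (E : Set (Sym2 (Fin n))) ⊆ G.edgeSet) = pr ^ E.card := by
  set M : Finset (Sym2 (Fin n)) := (⊤ : SimpleGraph (Fin n)).edgeFinset with hM
  have hMmem : ∀ e : Sym2 (Fin n), e ∈ M ↔ ¬ e.IsDiag := by
    intro e
    rw [hM, SimpleGraph.mem_edgeFinset, SimpleGraph.edgeSet_top]
    rfl
  have hEM : E ⊆ M := fun e he => (hMmem e).2 (hE e he)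
  have hMcard : M.card = n.choose 2 := by
    rw [hM, SimpleGraph.card_edgeFinset_top_eq_card_choose_two, Fintype.card_fin]
  -- reindex the sum over graphs as a sum over subsets of M
  have step1 : prob' n pr (fun G => (E : Set (Sym2 (Fin n))) ⊆ G.edgeSet)
      = ∑ S ∈ M.powerset, (if E ⊆ S then pr ^ S.card * (1 - pr) ^ (M.card - S.card) else 0) := by
    unfold prob'
    refine Finset.sum_nbij' (fun G => G.edgeFinset) (fun S => SimpleGraph.fromEdgeSet ↑S)
      (fun G _ => ?_) (fun S _ => Finset.mem_univ _) (fun G _ => ?_) (fun S hS => ?_)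
      (fun G _ => ?_)
    · rw [Finset.mem_powerset, hM]
      exact SimpleGraph.edgeFinset_mono le_top
    · rw [SimpleGraph.coe_edgeFinset, SimpleGraph.fromEdgeSet_edgeSet]
    · rw [Finset.mem_powerset] at hS
      apply Finset.coe_injective
      rw [SimpleGraph.coe_edgeFinset, SimpleGraph.edgeSet_fromEdgeSet]
      ext e
      simp only [Set.mem_diff, Set.mem_setOf_eq, Finset.mem_coe, and_iff_left_iff_imp]
      intro heS
      exact (hMmem e).1 (hS heS)
    · dsimp only
      have hiff : (E : Set (Sym2 (Fin n))) ⊆ G.edgeSet ↔ E ⊆ G.edgeFinset := by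
        rw [← SimpleGraph.coe_edgeFinset, Finset.coe_subset]
      rw [if_congr hiff rfl rfl, weight, edgeCount_eq_card_edgeFinset, hMcard]
  rw [step1]
  rw [Finset.sum_ite, Finset.sum_const_zero, add_zero]
  have step2 : ∑ S ∈ M.powerset.filter (fun S => E ⊆ S),
        (pr ^ S.card * (1 - pr) ^ (M.card - S.card))
      = ∑ T ∈ (M \ E).powerset, pr ^ (E.card + T.card)
          * (1 - pr) ^ ((M \ E).card - T.card) := by
    refine Finset.sum_nbij' (fun S => S \ E) (fun T => E ∪ T) ?_ ?_ ?_ ?_ ?_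
    · intro S hS
      rw [Finset.mem_filter, Finset.mem_powerset] at hS
      rw [Finset.mem_powerset]
      exact Finset.sdiff_subset_sdiff hS.1 (le_refl E)
    · intro T hT
      rw [Finset.mem_powerset] at hT
      rw [Finset.mem_filter, Finset.mem_powerset]
      exact ⟨Finset.union_subset hEM (hT.trans Finset.sdiff_subset), Finset.subset_union_left⟩
    · intro S hS
      rw [Finset.mem_filter] at hS
      exact Finset.union_sdiff_of_subset hS.2
    · intro T hT
      rw [Finset.mem_powerset] at hT
      have hd : Disjoint E T := by
        refine Finset.disjoint_left.2 fun a haE haT => ?_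
        exact (Finset.mem_sdiff.1 (hT haT)).2 haE
      rw [Finset.union_sdiff_cancel_left hd]
    · intro S hS
      rw [Finset.mem_filter, Finset.mem_powerset] at hS
      have hES : E.card ≤ S.card := Finset.card_le_card hS.2
      have hSM : S.card ≤ M.card := Finset.card_le_card hS.1
      have hc1 : (S \ E).card = S.card - E.card := Finset.card_sdiff_of_subset hS.2
      have hc2 : (M \ E).card = M.card - E.card := Finset.card_sdiff_of_subset hEM
      rw [hc1, hc2]
      have e1 : E.card + (S.card - E.card) = S.card := by omega
      have e2 : M.card - E.card - (S.card - E.card) = M.card - S.card := by omega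
      rw [e1, e2]
  rw [step2]
  have : ∀ T ∈ (M \ E).powerset, pr ^ (E.card + T.card) * (1 - pr) ^ ((M \ E).card - T.card)
      = pr ^ E.card * (pr ^ T.card * (1 - pr) ^ ((M \ E).card - T.card)) := by
    intro T _
    rw [pow_add, mul_assoc]
  rw [Finset.sum_congr rfl this, ← Finset.mul_sum, sum_pow_card]
  have : pr + (1 - pr) = 1 := by ring
  rw [this, one_pow, mul_one]

end ProbFramework

section ProbFramework2

open Finset SimpleGraph
open scoped Classical

variable {n : ℕ} {pr : ℝ}

lemma prob'_total (h0 : 0 ≤ pr) (h1 : pr ≤ 1) :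
    prob' n pr (fun _ => True) = 1 := by
  have := prob'_edges_subset (n := n) h0 h1 ∅ (by simp)
  simpa using this

lemma prob'_le_one (h0 : 0 ≤ pr) (h1 : pr ≤ 1) (P : SimpleGraph (Fin n) → Prop) :
    prob' n pr P ≤ 1 := by
  rw [← prob'_total (n := n) h0 h1]
  exact prob'_mono h0 h1 fun G _ => trivial

/-- Union bound. -/
lemma prob'_le_sum {ι : Type*} (h0 : 0 ≤ pr) (h1 : pr ≤ 1) (s : Finset ι)
    (P : SimpleGraph (Fin n) → Prop) (Q : ι → SimpleGraph (Fin n) → Prop)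
    (hPQ : ∀ G, P G → ∃ i ∈ s, Q i G) :
    prob' n pr P ≤ ∑ i ∈ s, prob' n pr (Q i) := by
  unfold prob'
  rw [Finset.sum_comm]
  refine Finset.sum_le_sum fun G _ => ?_
  by_cases hP : P G
  · obtain ⟨i, his, hQi⟩ := hPQ G hP
    rw [if_pos hP]
    have hle := Finset.single_le_sum (f := fun i => if Q i G then weight n pr G else 0)
      (fun j _ => by
        split
        · exact weight_nonneg h0 h1 G
        · exact le_refl 0) his
    rw [if_pos hQi] at hle
    exact hle
  · rw [if_neg hP]
    refine Finset.sum_nonneg fun j _ => ?_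
    split
    · exact weight_nonneg h0 h1 G
    · exact le_refl 0

variable {U : Type*} [Fintype U] (Kp : SimpleGraph U)

/-- The edge set of the image of a graph homomorphism candidate. -/
noncomputable def imgEdges (f : U → Fin n) : Finset (Sym2 (Fin n)) :=
  Kp.edgeFinset.image (Sym2.map f)

lemma imgEdges_not_isDiag {f : U → Fin n} (hf : Function.Injective f) :
    ∀ e ∈ imgEdges Kp f, ¬ e.IsDiag := by
  intro e he
  rw [imgEdges, Finset.mem_image] at he
  obtain ⟨e', he', rfl⟩ := he
  induction e' with
  | _ u v =>
    rw [SimpleGraph.mem_edgeFinset, SimpleGraph.mem_edgeSet] at he'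
    simp only [Sym2.map_pair_eq, Sym2.isDiag_iff_proj_eq]
    exact fun h => he'.ne (hf h)

lemma card_imgEdges {f : U → Fin n} (hf : Function.Injective f) :
    (imgEdges Kp f).card = Kp.edgeFinset.card :=
  Finset.card_image_of_injective _ (Sym2.map.injective hf)

lemma hom_iff_imgEdges_subset (f : U → Fin n) (Γ : SimpleGraph (Fin n)) :
    (∀ u v : U, Kp.Adj u v → Γ.Adj (f u) (f v)) ↔
      (imgEdges Kp f : Set (Sym2 (Fin n))) ⊆ Γ.edgeSet := by
  constructor
  · intro h e he
    rw [Finset.mem_coe, imgEdges, Finset.mem_image] at he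
    obtain ⟨e', he', rfl⟩ := he
    induction e' with
    | _ u v =>
      rw [SimpleGraph.mem_edgeFinset, SimpleGraph.mem_edgeSet] at he'
      exact h u v he'
  · intro h u v huv
    have : Sym2.map f s(u, v) ∈ imgEdges Kp f := by
      rw [imgEdges, Finset.mem_image]
      exact ⟨s(u, v), SimpleGraph.mem_edgeFinset.2 huv, rfl⟩
    have h2 := h (Finset.mem_coe.2 this)
    rwa [Sym2.map_pair_eq, SimpleGraph.mem_edgeSet] at h2

/-- The probability that a fixed injection is a homomorphism. -/
lemma prob'_hom (h0 : 0 ≤ pr) (h1 : pr ≤ 1) {f : U → Fin n} (hf : Function.Injective f) :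
    prob' n pr (fun Γ => ∀ u v : U, Kp.Adj u v → Γ.Adj (f u) (f v))
      = pr ^ Kp.edgeFinset.card := by
  rw [prob'_congr (fun Γ => hom_iff_imgEdges_subset Kp f Γ),
    prob'_edges_subset h0 h1 _ (imgEdges_not_isDiag Kp hf), card_imgEdges Kp hf]

end ProbFramework2

section Density

open SimpleGraph

variable {W : Type*} [Fintype W] (Gp : SimpleGraph W)

instance : Finite Gp.Subgraph := by
  classical
  refine Finite.of_injective
    (fun H => ((H.verts, H.Adj) : Set W × (W → W → Prop))) ?_
  intro H1 H2 h
  rw [Prod.mk.injEq] at h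
  exact SimpleGraph.Subgraph.ext h.1 h.2

lemma densSet_finite :
    {x : ℝ | ∃ H : Gp.Subgraph, H.verts.Nonempty ∧ x = density H.coe}.Finite := by
  have : {x : ℝ | ∃ H : Gp.Subgraph, H.verts.Nonempty ∧ x = density H.coe}
      = (fun H : Gp.Subgraph => density H.coe) '' {H | H.verts.Nonempty} := by
    ext x
    simp only [Set.mem_setOf_eq, Set.mem_image]
    exact ⟨fun ⟨H, h1, h2⟩ => ⟨H, h1, h2.symm⟩, fun ⟨H, h1, h2⟩ => ⟨H, h1, h2.symm⟩⟩
  rw [this]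
  exact Set.Finite.image _ (Set.toFinite _)

lemma density_le_maxDensity (H : Gp.Subgraph) (h : H.verts.Nonempty) :
    density H.coe ≤ maxDensity Gp :=
  le_csSup ((densSet_finite Gp).bddAbove) ⟨H, h, rfl⟩

/-- `Nat.card` of the edge set of the coercion of a subgraph. -/
lemma natCard_coe_edgeSet (H : Gp.Subgraph) :
    Nat.card H.coe.edgeSet = Nat.card H.edgeSet := by
  rw [Nat.card_coe_set_eq, Nat.card_coe_set_eq,
    ← SimpleGraph.Subgraph.image_coe_edgeSet_coe H,
    Set.ncard_image_of_injective _ (Sym2.map.injective Subtype.val_injective)]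

lemma nonempty_W (hE : Gp.edgeSet.Nonempty) : Nonempty W := by
  obtain ⟨e, he⟩ := hE
  induction e with
  | _ u v => exact ⟨u⟩

lemma density_top_eq : density (⊤ : Gp.Subgraph).coe
    = (Nat.card Gp.edgeSet : ℝ) / (Nat.card W : ℝ) := by
  rw [density]
  congr 1
  · congr 1
    exact Nat.card_congr (SimpleGraph.Iso.mapEdgeSet (SimpleGraph.Subgraph.topIso))
  · congr 1
    rw [SimpleGraph.Subgraph.verts_top]
    exact Nat.card_congr (Equiv.Set.univ W)

lemma maxDensity_pos (hE : Gp.edgeSet.Nonempty) : 0 < maxDensity Gp := by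
  have hW : Nonempty W := nonempty_W Gp hE
  have hcW : 0 < (Nat.card W : ℝ) := by
    have := Nat.card_pos (α := W)
    exact_mod_cast this
  have hcE : 0 < (Nat.card Gp.edgeSet : ℝ) := by
    have : Nonempty Gp.edgeSet := hE.to_subtype
    have := Nat.card_pos (α := Gp.edgeSet)
    exact_mod_cast this
  have h1 : 0 < density (⊤ : Gp.Subgraph).coe := by
    rw [density_top_eq]
    positivity
  exact lt_of_lt_of_le h1 (density_le_maxDensity Gp ⊤ (by
    rw [SimpleGraph.Subgraph.verts_top]
    exact Set.univ_nonempty))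

lemma exists_max_subgraph (hE : Gp.edgeSet.Nonempty) :
    ∃ H : Gp.Subgraph, H.verts.Nonempty ∧ density H.coe = maxDensity Gp := by
  have hW : Nonempty W := nonempty_W Gp hE
  have hne : {x : ℝ | ∃ H : Gp.Subgraph, H.verts.Nonempty ∧ x = density H.coe}.Nonempty :=
    ⟨density (⊤ : Gp.Subgraph).coe, ⟨⊤, by
      rw [SimpleGraph.Subgraph.verts_top]
      exact Set.univ_nonempty, rfl⟩⟩
  obtain ⟨H, h1, h2⟩ := hne.csSup_mem (densSet_finite Gp)
  exact ⟨H, h1, h2.symm⟩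

end Density

section PartOne

open Finset SimpleGraph Asymptotics Filter
open scoped Classical

lemma natCard_edgeSet_eq {V : Type*} [Fintype V] (G : SimpleGraph V) :
    Nat.card G.edgeSet = G.edgeFinset.card := by
  rw [Nat.card_eq_fintype_card, SimpleGraph.edgeFinset, Set.toFinset_card]

lemma prob'_false {n : ℕ} {pr : ℝ} : prob' n pr (fun _ => False) = 0 := by
  unfold prob'
  simp

lemma containsCopy_of_subgraph {V : Type*} {W : Type*} (Gp : SimpleGraph W)
    (H : Gp.Subgraph) (Γ : SimpleGraph V) (h : ContainsCopy Gp Γ) :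
    ContainsCopy H.coe Γ := by
  obtain ⟨f, hf, hadj⟩ := h
  refine ⟨f ∘ Subtype.val, hf.comp Subtype.val_injective, fun u v huv => ?_⟩
  exact hadj _ _ (H.adj_sub huv)

lemma prob'_containsCopy_le {n : ℕ} {pr : ℝ} (h0 : 0 ≤ pr) (h1 : pr ≤ 1)
    {U : Type*} [Fintype U] (Kp : SimpleGraph U) :
    prob' n pr (fun Γ => ContainsCopy Kp Γ)
      ≤ (n : ℝ) ^ (Fintype.card U) * pr ^ Kp.edgeFinset.card := by
  have step := prob'_le_sum (n := n) (pr := pr) h0 h1 Finset.univ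
    (fun Γ => ContainsCopy Kp Γ)
    (fun (f : U → Fin n) Γ => Function.Injective f ∧ ∀ u v : U, Kp.Adj u v → Γ.Adj (f u) (f v))
    (fun Γ hΓ => by
      obtain ⟨f, hf, hadj⟩ := hΓ
      exact ⟨f, Finset.mem_univ f, hf, hadj⟩)
  refine le_trans step ?_
  have hbd : ∀ f : U → Fin n,
      prob' n pr (fun Γ => Function.Injective f ∧ ∀ u v : U, Kp.Adj u v → Γ.Adj (f u) (f v))
        ≤ pr ^ Kp.edgeFinset.card := by
    intro f
    by_cases hf : Function.Injective f
    · rw [prob'_congr (fun Γ => and_iff_right hf), prob'_hom Kp h0 h1 hf]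
    · rw [prob'_congr (Q := fun _ => False)
        (fun Γ => iff_false_intro (fun hc => hf hc.1)), prob'_false]
      exact pow_nonneg h0 _
  refine le_trans (Finset.sum_le_sum fun f _ => hbd f) ?_
  rw [Finset.sum_const, Finset.card_univ, nsmul_eq_mul]
  have : (Fintype.card (U → Fin n) : ℝ) = (n : ℝ) ^ (Fintype.card U) := by
    rw [Fintype.card_fun, Fintype.card_fin]
    push_cast
    ring
  rw [this]

lemma part_one {W : Type*} [Fintype W] (Gp : SimpleGraph W)
    (hE : Gp.edgeSet.Nonempty) (p : ℕ → ℝ) (hp : ∀ n, 0 ≤ p n ∧ p n ≤ 1)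
    (h : p =o[atTop] fun n : ℕ => (n : ℝ) ^ (-(1 / maxDensity Gp))) :
    Tendsto (fun n : ℕ => probPred n (p n) (fun Γ => ContainsCopy Gp Γ))
      atTop (nhds 0) := by
  classical
  set ρ := maxDensity Gp with hρdef
  have hρ : 0 < ρ := maxDensity_pos Gp hE
  obtain ⟨H, hHne, hHden⟩ := exists_max_subgraph Gp hE
  set v : ℕ := Fintype.card ↥H.verts with hvdef
  set e : ℕ := H.coe.edgeFinset.card with hedef
  have hv : 0 < v := Fintype.card_pos_iff.2 hHne.to_subtype
  have hde : ((e : ℝ) / (v : ℝ)) = ρ := by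
    rw [hρdef, ← hHden, density, natCard_edgeSet_eq, Nat.card_eq_fintype_card]
    rw [hedef, hvdef]
    congr!
  have hvR : (0:ℝ) < v := by exact_mod_cast hv
  have he : 0 < e := by
    by_contra hc
    push_neg at hc
    interval_cases e
    rw [Nat.cast_zero, zero_div] at hde
    exact absurd hde.symm (ne_of_gt hρ)
  -- pointwise bound
  have hbound : ∀ n : ℕ, probPred n (p n) (fun Γ => ContainsCopy Gp Γ)
      ≤ (n : ℝ) ^ v * (p n) ^ e := by
    intro n
    rw [probPred_eq_prob']
    refine le_trans (prob'_mono (hp n).1 (hp n).2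
      (fun Γ => containsCopy_of_subgraph Gp H Γ)) ?_
    exact prob'_containsCopy_le (hp n).1 (hp n).2 H.coe
  have hnonneg : ∀ n : ℕ, 0 ≤ probPred n (p n) (fun Γ => ContainsCopy Gp Γ) := by
    intro n
    rw [probPred_eq_prob']
    exact prob'_nonneg (hp n).1 (hp n).2 _
  refine squeeze_zero hnonneg hbound ?_
  -- the bound tends to 0
  rw [← isLittleO_one_iff ℝ]
  have h1 : (fun n : ℕ => (p n) ^ e) =o[atTop]
      (fun n : ℕ => ((n : ℝ) ^ (-(1 / ρ))) ^ e) := h.pow he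
  have h2 : (fun n : ℕ => (n : ℝ) ^ v * (p n) ^ e) =o[atTop]
      (fun n : ℕ => (n : ℝ) ^ v * ((n : ℝ) ^ (-(1 / ρ))) ^ e) :=
    (isBigO_refl (fun n : ℕ => (n : ℝ) ^ v) atTop).mul_isLittleO h1
  refine h2.trans_isBigO ?_
  have heq : ∀ᶠ n : ℕ in atTop,
      (n : ℝ) ^ v * ((n : ℝ) ^ (-(1 / ρ))) ^ e = 1 := by
    filter_upwards [eventually_ge_atTop 1] with n hn
    have hn0 : (0:ℝ) < n := by exact_mod_cast hn
    rw [← Real.rpow_natCast ((n:ℝ) ^ (-(1/ρ))) e, ← Real.rpow_natCast (n:ℝ) v,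
      ← Real.rpow_mul hn0.le, ← Real.rpow_add hn0]
    have : (v : ℝ) + (-(1 / ρ)) * (e : ℕ) = 0 := by
      have heρ : (e : ℝ) = ρ * v := by
        field_simp at hde
        linarith [hde]
      have hρ0 : ρ ≠ 0 := ne_of_gt hρ
      rw [heρ]
      field_simp
      ring
    rw [this, Real.rpow_zero]
  exact (Filter.EventuallyEq.isBigO heq)

end PartOne

section Shared

open Finset SimpleGraph
open scoped Classical

variable {W : Type*} [Fintype W] (Gp : SimpleGraph W) {n : ℕ}

/-- The number of common vertices of the images of `f` and `g`. -/
noncomputable def overlapCard (f g : W → Fin n) : ℕ :=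
  ((Finset.univ.image f) ∩ (Finset.univ.image g)).card

/-- The subgraph of `Gp` formed by pulling back along `f` the edges common to the two
copies determined by `f` and `g`. -/
noncomputable def sharedSub (f g : W → Fin n) : Gp.Subgraph where
  verts := {u | f u ∈ Finset.univ.image g}
  Adj u v := Gp.Adj u v ∧ s(f u, f v) ∈ imgEdges Gp g
  adj_sub h := h.1
  edge_vert := by
    intro u v h
    obtain ⟨e', he', heq⟩ := Finset.mem_image.1 h.2
    induction e' with
    | _ a b =>
      rw [Sym2.map_pair_eq, Sym2.eq_iff] at heq
      simp only [Set.mem_setOf_eq, Finset.mem_image]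
      rcases heq with ⟨h1, _⟩ | ⟨_, h2⟩
      · exact ⟨a, Finset.mem_univ a, h1⟩
      · exact ⟨b, Finset.mem_univ b, h2⟩
  symm := by
    constructor
    intro u v h
    refine ⟨h.1.symm, ?_⟩
    rw [Sym2.eq_swap]
    exact h.2

lemma natCard_verts_sharedSub {f g : W → Fin n} (hf : Function.Injective f) :
    Nat.card (sharedSub Gp f g).verts = overlapCard f g := by
  rw [Nat.card_coe_set_eq]
  have himg : f '' (sharedSub Gp f g).verts
      = ((Finset.univ.image f) ∩ (Finset.univ.image g) : Finset (Fin n)) := by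
    ext x
    simp only [sharedSub, Set.mem_image, Set.mem_setOf_eq, Finset.coe_inter,
      Set.mem_inter_iff, Finset.mem_coe, Finset.mem_image]
    constructor
    · rintro ⟨u, hu, rfl⟩
      exact ⟨⟨u, Finset.mem_univ u, rfl⟩, hu⟩
    · rintro ⟨⟨u, _, rfl⟩, hx⟩
      exact ⟨u, hx, rfl⟩
  have := Set.ncard_image_of_injective (sharedSub Gp f g).verts hf
  rw [himg] at this
  rw [← this, Set.ncard_coe_finset]
  rfl

lemma natCard_edges_sharedSub {f g : W → Fin n} (hf : Function.Injective f) :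
    Nat.card (sharedSub Gp f g).coe.edgeSet
      = ((imgEdges Gp f) ∩ (imgEdges Gp g)).card := by
  rw [natCard_coe_edgeSet, Nat.card_coe_set_eq]
  have himg : Sym2.map f '' (sharedSub Gp f g).edgeSet
      = ((imgEdges Gp f) ∩ (imgEdges Gp g) : Finset (Sym2 (Fin n))) := by
    ext x
    simp only [Set.mem_image, Finset.coe_inter, Set.mem_inter_iff, Finset.mem_coe]
    constructor
    · rintro ⟨e, he, rfl⟩
      induction e with
      | _ u v =>
        rw [SimpleGraph.Subgraph.mem_edgeSet] at he
        obtain ⟨hadj, hmem⟩ := he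
        constructor
        · rw [imgEdges, Finset.mem_image]
          exact ⟨s(u,v), SimpleGraph.mem_edgeFinset.2 hadj, rfl⟩
        · rwa [Sym2.map_pair_eq]
    · rintro ⟨hxf, hxg⟩
      obtain ⟨e', he', rfl⟩ := Finset.mem_image.1 hxf
      induction e' with
      | _ u v =>
        refine ⟨s(u,v), ?_, rfl⟩
        rw [SimpleGraph.Subgraph.mem_edgeSet]
        rw [SimpleGraph.mem_edgeFinset, SimpleGraph.mem_edgeSet] at he'
        refine ⟨he', ?_⟩
        exact hxg
  have := Set.ncard_image_of_injective (sharedSub Gp f g).edgeSet (Sym2.map.injective hf)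
  rw [himg] at this
  rw [← this, Set.ncard_coe_finset]

/-- Key density estimate: the number of common edges is at most `ρ^max` times the number
of common vertices. -/
lemma card_inter_imgEdges_le {f g : W → Fin n} (hf : Function.Injective f)
    (hne : ((imgEdges Gp f) ∩ (imgEdges Gp g)).Nonempty) :
    (((imgEdges Gp f) ∩ (imgEdges Gp g)).card : ℝ)
      ≤ maxDensity Gp * (overlapCard f g : ℝ) ∧ 0 < overlapCard f g := by
  have hvne : (sharedSub Gp f g).verts.Nonempty := by
    obtain ⟨x, hx⟩ := hne
    rw [Finset.mem_inter] at hx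
    obtain ⟨e', he', heq⟩ := Finset.mem_image.1 hx.1
    induction e' with
    | _ u v =>
      have hadj : (sharedSub Gp f g).Adj u v := by
        rw [SimpleGraph.mem_edgeFinset, SimpleGraph.mem_edgeSet] at he'
        refine ⟨he', ?_⟩
        rw [← heq] at hx
        exact hx.2
      exact ⟨u, (sharedSub Gp f g).edge_vert hadj⟩
  have hdle := density_le_maxDensity Gp (sharedSub Gp f g) hvne
  rw [density, natCard_edges_sharedSub Gp hf, natCard_verts_sharedSub Gp hf] at hdle
  have hs : 0 < overlapCard f g := by
    rw [← natCard_verts_sharedSub Gp hf]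
    have : Nonempty (sharedSub Gp f g).verts := hvne.to_subtype
    exact Nat.card_pos
  have hsR : (0:ℝ) < (overlapCard f g : ℝ) := by exact_mod_cast hs
  rw [div_le_iff₀ hsR] at hdle
  exact ⟨hdle, hs⟩

lemma card_filter_overlap {f g : W → Fin n} (hg : Function.Injective g) :
    (Finset.univ.filter (fun w => g w ∈ Finset.univ.image f)).card = overlapCard f g := by
  have himg : (Finset.univ.filter (fun w => g w ∈ Finset.univ.image f)).image g
      = (Finset.univ.image g) ∩ (Finset.univ.image f) := by
    ext x
    simp only [Finset.mem_image, Finset.mem_filter, Finset.mem_inter]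
    constructor
    · rintro ⟨w, ⟨_, hw⟩, rfl⟩
      exact ⟨⟨w, Finset.mem_univ w, rfl⟩, hw⟩
    · rintro ⟨⟨w, _, rfl⟩, hx⟩
      exact ⟨w, ⟨Finset.mem_univ w, hx⟩, rfl⟩
  have := Finset.card_image_of_injective
    (Finset.univ.filter (fun w => g w ∈ Finset.univ.image f)) hg
  rw [himg] at this
  rw [← this, overlapCard, Finset.inter_comm]

end Shared

section PartTwo

open Finset SimpleGraph Filter Asymptotics
open scoped Classical

variable {W : Type*} [Fintype W] (Gp : SimpleGraph W)

/-- `f` maps edges of `Gp` to edges of `Γ`. -/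
def homEvent {n : ℕ} (f : W → Fin n) (Γ : SimpleGraph (Fin n)) : Prop :=
  ∀ u v : W, Gp.Adj u v → Γ.Adj (f u) (f v)

/-- All injections `W → Fin n`. -/
noncomputable def injSet (W : Type*) [Fintype W] (n : ℕ) : Finset (W → Fin n) :=
  Finset.univ.filter (fun f => Function.Injective f)

/-- The (real-valued) number of injective homomorphic images of `Gp` in `Γ`. -/
noncomputable def copyCount {n : ℕ} (Γ : SimpleGraph (Fin n)) : ℝ :=
  ∑ f ∈ injSet W n, (if homEvent Gp f Γ then (1:ℝ) else 0)

lemma containsCopy_iff {n : ℕ} (Γ : SimpleGraph (Fin n)) :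
    ContainsCopy Gp Γ ↔ ∃ f ∈ injSet W n, homEvent Gp f Γ := by
  unfold ContainsCopy injSet homEvent
  constructor
  · rintro ⟨f, hf, h⟩
    exact ⟨f, Finset.mem_filter.2 ⟨Finset.mem_univ f, hf⟩, h⟩
  · rintro ⟨f, hf, h⟩
    exact ⟨f, (Finset.mem_filter.1 hf).2, h⟩

lemma copyCount_eq_zero {n : ℕ} {Γ : SimpleGraph (Fin n)} (h : ¬ ContainsCopy Gp Γ) :
    copyCount Gp Γ = 0 := by
  refine Finset.sum_eq_zero fun f hf => ?_
  rw [if_neg]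
  intro hhom
  exact h ((containsCopy_iff Gp Γ).2 ⟨f, hf, hhom⟩)

/-- First moment. -/
lemma first_moment {n : ℕ} {pr : ℝ} (h0 : 0 ≤ pr) (h1 : pr ≤ 1) :
    ∑ G : SimpleGraph (Fin n), weight n pr G * copyCount Gp G
      = ((injSet W n).card : ℝ) * pr ^ Gp.edgeFinset.card := by
  unfold copyCount
  simp_rw [Finset.mul_sum]
  rw [Finset.sum_comm]
  have hterm : ∀ f ∈ injSet W n,
      ∑ G : SimpleGraph (Fin n), weight n pr G * (if homEvent Gp f G then (1:ℝ) else 0)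
        = pr ^ Gp.edgeFinset.card := by
    intro f hf
    have hinj : Function.Injective f := (Finset.mem_filter.1 hf).2
    have : ∀ G : SimpleGraph (Fin n),
        weight n pr G * (if homEvent Gp f G then (1:ℝ) else 0)
        = if homEvent Gp f G then weight n pr G else 0 := by
      intro G
      split <;> simp
    rw [Finset.sum_congr rfl fun G _ => this G]
    exact prob'_hom Gp h0 h1 hinj
  rw [Finset.sum_congr rfl hterm, Finset.sum_const, nsmul_eq_mul]

/-- Probability that two given injections are both homomorphisms. -/
lemma prob'_pair {n : ℕ} {pr : ℝ} (h0 : 0 ≤ pr) (h1 : pr ≤ 1) {f g : W → Fin n}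
    (hf : Function.Injective f) (hg : Function.Injective g) :
    prob' n pr (fun Γ => homEvent Gp f Γ ∧ homEvent Gp g Γ)
      = pr ^ ((imgEdges Gp f ∪ imgEdges Gp g).card) := by
  have hiff : ∀ Γ : SimpleGraph (Fin n), (homEvent Gp f Γ ∧ homEvent Gp g Γ)
      ↔ ((imgEdges Gp f ∪ imgEdges Gp g : Finset (Sym2 (Fin n))) : Set (Sym2 (Fin n)))
          ⊆ Γ.edgeSet := by
    intro Γ
    rw [homEvent, homEvent, hom_iff_imgEdges_subset, hom_iff_imgEdges_subset,
      Finset.coe_union, Set.union_subset_iff]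
  rw [prob'_congr hiff]
  refine prob'_edges_subset h0 h1 _ fun e he => ?_
  rcases Finset.mem_union.1 he with h | h
  · exact imgEdges_not_isDiag Gp hf e h
  · exact imgEdges_not_isDiag Gp hg e h

/-- Second moment. -/
lemma second_moment {n : ℕ} {pr : ℝ} :
    ∑ G : SimpleGraph (Fin n), weight n pr G * (copyCount Gp G) ^ 2
      = ∑ f ∈ injSet W n, ∑ g ∈ injSet W n,
          prob' n pr (fun Γ => homEvent Gp f Γ ∧ homEvent Gp g Γ) := by
  have hG : ∀ G : SimpleGraph (Fin n), weight n pr G * (copyCount Gp G) ^ 2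
      = ∑ f ∈ injSet W n, ∑ g ∈ injSet W n,
          (if homEvent Gp f G ∧ homEvent Gp g G then weight n pr G else 0) := by
    intro G
    rw [sq, copyCount, Finset.sum_mul_sum, Finset.mul_sum]
    refine Finset.sum_congr rfl fun f _ => ?_
    rw [Finset.mul_sum]
    refine Finset.sum_congr rfl fun g _ => ?_
    by_cases hf : homEvent Gp f G <;> by_cases hg : homEvent Gp g G <;>
      simp [hf, hg]
  rw [Finset.sum_congr rfl fun G _ => hG G, Finset.sum_comm]
  refine Finset.sum_congr rfl fun f _ => ?_
  rw [Finset.sum_comm]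
  refine Finset.sum_congr rfl fun g _ => ?_
  unfold prob'
  refine Finset.sum_congr rfl fun G _ => ?_
  by_cases h : homEvent Gp f G ∧ homEvent Gp g G
  · rw [if_pos h, if_pos h]
  · rw [if_neg h, if_neg h]

/-- Cauchy–Schwarz step. -/
lemma cauchy_schwarz_step {n : ℕ} {pr : ℝ} (h0 : 0 ≤ pr) (h1 : pr ≤ 1) :
    (∑ G : SimpleGraph (Fin n), weight n pr G * copyCount Gp G) ^ 2
      ≤ prob' n pr (fun Γ => ContainsCopy Gp Γ)
        * ∑ G : SimpleGraph (Fin n), weight n pr G * (copyCount Gp G) ^ 2 := by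
  have hCS := Finset.sum_mul_sq_le_sq_mul_sq Finset.univ
    (fun G : SimpleGraph (Fin n) =>
      Real.sqrt (weight n pr G) * (if ContainsCopy Gp G then 1 else 0))
    (fun G : SimpleGraph (Fin n) => Real.sqrt (weight n pr G) * copyCount Gp G)
  have e1 : ∀ G : SimpleGraph (Fin n),
      (Real.sqrt (weight n pr G) * (if ContainsCopy Gp G then 1 else 0))
        * (Real.sqrt (weight n pr G) * copyCount Gp G)
      = weight n pr G * copyCount Gp G := by
    intro G
    by_cases h : ContainsCopy Gp G
    · rw [if_pos h, mul_one, ← mul_assoc, Real.mul_self_sqrt (weight_nonneg h0 h1 G)]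
    · rw [if_neg h, copyCount_eq_zero Gp h]
      ring
  have e2 : ∀ G : SimpleGraph (Fin n),
      (Real.sqrt (weight n pr G) * (if ContainsCopy Gp G then 1 else 0)) ^ 2
      = if ContainsCopy Gp G then weight n pr G else 0 := by
    intro G
    by_cases h : ContainsCopy Gp G <;>
      simp [h, mul_pow, Real.sq_sqrt (weight_nonneg h0 h1 G)]
  have e3 : ∀ G : SimpleGraph (Fin n),
      (Real.sqrt (weight n pr G) * copyCount Gp G) ^ 2
      = weight n pr G * (copyCount Gp G) ^ 2 := by
    intro G
    rw [mul_pow, Real.sq_sqrt (weight_nonneg h0 h1 G)]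
  rw [Finset.sum_congr rfl fun G _ => e1 G, Finset.sum_congr rfl fun G _ => e2 G,
    Finset.sum_congr rfl fun G _ => e3 G] at hCS
  exact hCS

/-- Per-pair estimate. -/
lemma pair_bound (hE : Gp.edgeSet.Nonempty) {n : ℕ} {pr C : ℝ} (h0 : 0 < pr) (h1 : pr ≤ 1)
    (hC : 1 ≤ C) (hpC : C * (n:ℝ) ^ (-(1 / maxDensity Gp)) ≤ pr) (hn1 : 1 ≤ n)
    {f g : W → Fin n} (hf : Function.Injective f) (hg : Function.Injective g) :
    pr ^ ((imgEdges Gp f ∪ imgEdges Gp g).card)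
      ≤ pr ^ (2 * Gp.edgeFinset.card) + pr ^ (2 * Gp.edgeFinset.card) * C⁻¹ *
        ∏ w_ : W, (if g w_ ∈ Finset.univ.image f then (n:ℝ) else 1) := by
  set ρ := maxDensity Gp with hρdef
  have hρ : 0 < ρ := maxDensity_pos Gp hE
  set e := Gp.edgeFinset.card with hedef
  have hcard : (imgEdges Gp f ∪ imgEdges Gp g).card
      + (imgEdges Gp f ∩ imgEdges Gp g).card = 2 * e := by
    rw [Finset.card_union_add_card_inter, card_imgEdges Gp hf, card_imgEdges Gp hg]
    ring
  set m := (imgEdges Gp f ∪ imgEdges Gp g).card with hmdef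
  set c := (imgEdges Gp f ∩ imgEdges Gp g).card with hcdef
  have hn0 : (0:ℝ) < (n:ℝ) := by exact_mod_cast Nat.lt_of_lt_of_le Nat.zero_lt_one hn1
  have hC0 : (0:ℝ) < C := lt_of_lt_of_le one_pos hC
  have hprod0 : (0:ℝ) ≤ ∏ w_ : W, (if g w_ ∈ Finset.univ.image f then (n:ℝ) else 1) := by
    refine Finset.prod_nonneg fun w_ _ => ?_
    split
    · exact hn0.le
    · norm_num
  by_cases hc0 : c = 0
  · have hm : m = 2 * e := by omega
    rw [hm]
    have h2 : 0 ≤ pr ^ (2*e) * C⁻¹ *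
        ∏ w_ : W, (if g w_ ∈ Finset.univ.image f then (n:ℝ) else 1) :=
      mul_nonneg (mul_nonneg (pow_nonneg h0.le _) (inv_nonneg.2 hC0.le)) hprod0
    linarith
  · have hcpos : 0 < c := Nat.pos_of_ne_zero hc0
    have hne : (imgEdges Gp f ∩ imgEdges Gp g).Nonempty := Finset.card_pos.1 hcpos
    obtain ⟨hcs, hspos⟩ := card_inter_imgEdges_le Gp hf hne
    set s := overlapCard f g with hsdef
    have hprodeq : ∏ w_ : W, (if g w_ ∈ Finset.univ.image f then (n:ℝ) else 1)
        = (n:ℝ) ^ s := by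
      rw [Finset.prod_ite _ _]
      rw [Finset.prod_const, Finset.prod_const, one_pow, mul_one, card_filter_overlap hg]
    have hkey : C ≤ pr ^ c * (n:ℝ) ^ s := by
      have hb : (0:ℝ) ≤ C * (n:ℝ) ^ (-(1/ρ)) :=
        mul_nonneg hC0.le (Real.rpow_nonneg hn0.le _)
      have h1' : (C * (n:ℝ)^(-(1/ρ)))^c ≤ pr^c := pow_le_pow_left₀ hb hpC c
      have h3' : ((n:ℝ)^(-(1/ρ)))^c * (n:ℝ)^s = (n:ℝ) ^ ((-(1/ρ))*(c:ℝ) + (s:ℝ)) := by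
        rw [← Real.rpow_natCast ((n:ℝ)^(-(1/ρ))) c, ← Real.rpow_mul hn0.le,
          ← Real.rpow_natCast (n:ℝ) s, ← Real.rpow_add hn0]
      have hexp : 0 ≤ (-(1/ρ))*(c:ℝ) + (s:ℝ) := by
        have hdiv : (c:ℝ)/ρ ≤ (s:ℝ) := (div_le_iff₀ hρ).2 (by linarith [hcs])
        have heq2 : (-(1/ρ))*(c:ℝ) = -((c:ℝ)/ρ) := by ring
        linarith
      have h4' : 1 ≤ (n:ℝ) ^ ((-(1/ρ))*(c:ℝ) + (s:ℝ)) :=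
        Real.one_le_rpow (by exact_mod_cast hn1) hexp
      have h5' : C ≤ C^c := by
        calc C = C^1 := (pow_one C).symm
        _ ≤ C^c := pow_le_pow_right₀ hC hcpos
      calc C ≤ C^c * 1 := by rw [mul_one]; exact h5'
      _ ≤ C^c * (n:ℝ)^((-(1/ρ))*(c:ℝ) + (s:ℝ)) := by
          exact mul_le_mul_of_nonneg_left h4' (by positivity)
      _ = C^c * (((n:ℝ)^(-(1/ρ)))^c * (n:ℝ)^s) := by rw [h3']
      _ = (C * (n:ℝ)^(-(1/ρ)))^c * (n:ℝ)^s := by rw [mul_pow]; ring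
      _ ≤ pr^c * (n:ℝ)^s := mul_le_mul_of_nonneg_right h1' (by positivity)
    have hone : 1 ≤ pr^c * (n:ℝ)^s * C⁻¹ := by
      rw [← div_eq_mul_inv, le_div_iff₀ hC0, one_mul]
      exact hkey
    have hfinal : pr ^ m ≤ pr ^ (2*e) * C⁻¹ * (n:ℝ)^s := by
      calc pr^m = pr^m * 1 := (mul_one _).symm
      _ ≤ pr^m * (pr^c * (n:ℝ)^s * C⁻¹) :=
          mul_le_mul_of_nonneg_left hone (pow_nonneg h0.le m)
      _ = pr^(m + c) * C⁻¹ * (n:ℝ)^s := by rw [pow_add]; ring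
      _ = pr^(2*e) * C⁻¹ * (n:ℝ)^s := by rw [hcard]
    rw [hprodeq]
    have h2e0 : 0 ≤ pr ^(2*e) := pow_nonneg h0.le _
    linarith

/-- Counting estimate. -/
lemma count_sum_le {n : ℕ} (f : W → Fin n) :
    ∑ g ∈ injSet W n, ∏ w_ : W, (if g w_ ∈ Finset.univ.image f then (n:ℝ) else 1)
      ≤ (((Fintype.card W : ℝ) + 1) * (n:ℝ)) ^ (Fintype.card W) := by
  have hh0 : ∀ x : Fin n, (0:ℝ) ≤ (if x ∈ Finset.univ.image f then (n:ℝ) else 1) := by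
    intro x
    split
    · positivity
    · norm_num
  have hstep : ∑ g ∈ injSet W n, ∏ w_ : W, (if g w_ ∈ Finset.univ.image f then (n:ℝ) else 1)
      ≤ ∑ g : W → Fin n, ∏ w_ : W, (if g w_ ∈ Finset.univ.image f then (n:ℝ) else 1) := by
    refine Finset.sum_le_sum_of_subset_of_nonneg (Finset.filter_subset _ _) ?_
    intro g _ _
    exact Finset.prod_nonneg fun w_ _ => hh0 (g w_)
  refine le_trans hstep ?_
  have hpi := Finset.prod_univ_sum (fun _ : W => (Finset.univ : Finset (Fin n)))
    (fun _ x => if x ∈ Finset.univ.image f then (n:ℝ) else 1)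
  rw [Fintype.piFinset_univ] at hpi
  rw [← hpi, Finset.prod_const]
  refine pow_le_pow_left₀ (Finset.sum_nonneg fun x _ => hh0 x) ?_ _
  rw [Finset.sum_ite _ _, Finset.sum_const, Finset.sum_const, nsmul_eq_mul, nsmul_eq_mul,
    mul_one]
  have hc1 : ((Finset.univ.filter (fun x : Fin n => x ∈ Finset.univ.image f)).card : ℝ)
      ≤ (Fintype.card W : ℝ) := by
    have h1 : (Finset.univ.filter (fun x : Fin n => x ∈ Finset.univ.image f)).card
        ≤ (Finset.univ.image f).card := by
      refine Finset.card_le_card fun x hx => (Finset.mem_filter.1 hx).2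
    have h2 : (Finset.univ.image f).card ≤ Fintype.card W := by
      refine le_trans (Finset.card_image_le) ?_
      rw [Finset.card_univ]
    exact_mod_cast le_trans h1 h2
  have hc2 : ((Finset.univ.filter (fun x : Fin n => ¬ x ∈ Finset.univ.image f)).card : ℝ)
      ≤ (n : ℝ) := by
    have := Finset.card_filter_le (Finset.univ : Finset (Fin n))
      (fun x => ¬ x ∈ Finset.univ.image f)
    have h2 : (Finset.univ : Finset (Fin n)).card = n := by
      rw [Finset.card_univ, Fintype.card_fin]
    exact_mod_cast le_trans this (le_of_eq h2)
  have hn0 : (0:ℝ) ≤ (n:ℝ) := Nat.cast_nonneg n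
  nlinarith [hc1, hc2]
end PartTwo

section PartTwoMain

open Finset SimpleGraph Filter Asymptotics
open scoped Classical

variable {W : Type*} [Fintype W] (Gp : SimpleGraph W)

lemma injSet_card_eq (n : ℕ) : (injSet W n).card = n.descFactorial (Fintype.card W) := by
  rw [injSet, ← Fintype.card_subtype]
  rw [Fintype.card_congr (Equiv.subtypeInjectiveEquivEmbedding W (Fin n))]
  rw [Fintype.card_embedding_eq, Fintype.card_fin]

lemma main_bound (hE : Gp.edgeSet.Nonempty) {n : ℕ} {pr C : ℝ} (h0 : 0 < pr) (h1 : pr ≤ 1)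
    (hC : 1 ≤ C) (hpC : C * (n:ℝ) ^ (-(1 / maxDensity Gp)) ≤ pr)
    (hn : 2 * Fintype.card W ≤ n) (hn1 : 1 ≤ n) :
    1 - ((2 * ((Fintype.card W : ℝ) + 1)) ^ (Fintype.card W)) / C
      ≤ prob' n pr (fun Γ => ContainsCopy Gp Γ) := by
  classical
  set v := Fintype.card W with hvdef
  set e := Gp.edgeFinset.card with hedef
  set K : ℝ := (2 * ((v:ℝ)+1))^v with hKdef
  set I : ℕ := (injSet W n).card with hIdef
  set P := prob' n pr (fun Γ => ContainsCopy Gp Γ) with hPdef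
  set T : ℝ := (I:ℝ) * pr ^ e with hTdef
  set B : ℝ := (I:ℝ) * pr ^ (2*e) * C⁻¹ * (((v:ℝ)+1) * n)^v with hBdef
  have hC0 : (0:ℝ) < C := lt_of_lt_of_le one_pos hC
  have hn0R : (0:ℝ) < (n:ℝ) := by exact_mod_cast Nat.lt_of_lt_of_le Nat.zero_lt_one hn1
  -- lower bound on the number of injections
  have hIlow : ((n:ℝ)/2)^v ≤ (I:ℝ) := by
    have hd : (n + 1 - v)^v ≤ n.descFactorial v := Nat.pow_sub_le_descFactorial n v
    have hcast : (((n + 1 - v : ℕ) : ℝ))^v ≤ (I:ℝ) := by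
      rw [hIdef, injSet_card_eq]
      exact_mod_cast hd
    refine le_trans ?_ hcast
    have hv_le : v ≤ n + 1 := by omega
    have h2 : ((n + 1 - v : ℕ) : ℝ) = (n:ℝ) + 1 - v := by
      push_cast [Nat.cast_sub hv_le]
      ring
    have hvn : (v:ℝ) ≤ (n:ℝ)/2 := by
      have : (2 * v : ℕ) ≤ n := hn
      have h3 : ((2*v : ℕ):ℝ) ≤ (n:ℝ) := by exact_mod_cast this
      push_cast at h3
      linarith
    have h4 : (n:ℝ)/2 ≤ ((n + 1 - v : ℕ) : ℝ) := by
      rw [h2]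
      linarith
    exact pow_le_pow_left₀ (by positivity) h4 v
  have hIpos : (0:ℝ) < (I:ℝ) := lt_of_lt_of_le (pow_pos (half_pos hn0R) v) hIlow
  have hTpos : 0 < T := mul_pos hIpos (pow_pos h0 e)
  have hT2pos : 0 < T^2 := pow_pos hTpos 2
  have hT2 : T^2 = (I:ℝ)^2 * pr^(2*e) := by
    rw [hTdef, two_mul, pow_add]
    ring
  -- moments
  have hS1 : ∑ G : SimpleGraph (Fin n), weight n pr G * copyCount Gp G = T :=
    first_moment Gp h0.le h1
  have hS2le : ∑ G : SimpleGraph (Fin n), weight n pr G * (copyCount Gp G)^2 ≤ T^2 + B := by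
    rw [second_moment Gp]
    have hpair : ∀ f ∈ injSet W n, ∀ g ∈ injSet W n,
        prob' n pr (fun Γ => homEvent Gp f Γ ∧ homEvent Gp g Γ)
          ≤ pr^(2*e) + pr^(2*e) * C⁻¹ *
              ∏ w_ : W, (if g w_ ∈ Finset.univ.image f then (n:ℝ) else 1) := by
      intro f hf g hg
      have hfi : Function.Injective f := (Finset.mem_filter.1 hf).2
      have hgi : Function.Injective g := (Finset.mem_filter.1 hg).2
      rw [prob'_pair Gp h0.le h1 hfi hgi]
      exact pair_bound Gp hE h0 h1 hC hpC hn1 hfi hgi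
    have hsum : ∑ f ∈ injSet W n, ∑ g ∈ injSet W n,
        prob' n pr (fun Γ => homEvent Gp f Γ ∧ homEvent Gp g Γ)
        ≤ ∑ f ∈ injSet W n, ∑ g ∈ injSet W n,
            (pr^(2*e) + pr^(2*e) * C⁻¹ *
              ∏ w_ : W, (if g w_ ∈ Finset.univ.image f then (n:ℝ) else 1)) :=
      Finset.sum_le_sum fun f hf => Finset.sum_le_sum fun g hg => hpair f hf g hg
    refine le_trans hsum ?_
    have hfterm : ∀ f ∈ injSet W n, ∑ g ∈ injSet W n,
        (pr^(2*e) + pr^(2*e) * C⁻¹ *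
          ∏ w_ : W, (if g w_ ∈ Finset.univ.image f then (n:ℝ) else 1))
        ≤ (I:ℝ) * pr^(2*e) + pr^(2*e) * C⁻¹ * (((v:ℝ)+1) * n)^v := by
      intro f _
      rw [Finset.sum_add_distrib, Finset.sum_const, nsmul_eq_mul, ← Finset.mul_sum]
      refine add_le_add (le_refl _) ?_
      exact mul_le_mul_of_nonneg_left (count_sum_le f)
        (mul_nonneg (pow_nonneg h0.le _) (inv_nonneg.2 hC0.le))
    refine le_trans (Finset.sum_le_sum hfterm) ?_
    rw [Finset.sum_const, nsmul_eq_mul]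
    rw [hT2, hBdef]
    apply le_of_eq
    ring
  -- Cauchy-Schwarz
  have hCS : T^2 ≤ P * ∑ G : SimpleGraph (Fin n), weight n pr G * (copyCount Gp G)^2 := by
    have := cauchy_schwarz_step Gp h0.le h1 (n := n)
    rwa [hS1] at this
  have hP0 : 0 ≤ P := prob'_nonneg h0.le h1 _
  have hP1 : P ≤ 1 := prob'_le_one h0.le h1 _
  have hB0 : 0 ≤ B := by
    rw [hBdef]
    refine mul_nonneg (mul_nonneg (mul_nonneg (Nat.cast_nonneg I)
      (pow_nonneg h0.le _)) (inv_nonneg.2 hC0.le)) (pow_nonneg ?_ _)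
    positivity
  have hmain : T^2 ≤ P * (T^2 + B) :=
    le_trans hCS (mul_le_mul_of_nonneg_left hS2le hP0)
  -- B * C ≤ K * T^2
  have hX : ((((v:ℝ)+1)) * n)^v ≤ K * I := by
    have h1' : ((((v:ℝ)+1)) * n)^v = ((v:ℝ)+1)^v * (n:ℝ)^v := mul_pow _ _ _
    have h2' : ((n:ℝ))^v = 2^v * ((n:ℝ)/2)^v := by
      rw [← mul_pow]
      congr 1
      ring
    have h3' : ((v:ℝ)+1)^v * (2^v * ((n:ℝ)/2)^v) ≤ ((v:ℝ)+1)^v * (2^v * I) := by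
      refine mul_le_mul_of_nonneg_left ?_ (by positivity)
      exact mul_le_mul_of_nonneg_left hIlow (by positivity)
    calc ((((v:ℝ)+1)) * n)^v = ((v:ℝ)+1)^v * (2^v * ((n:ℝ)/2)^v) := by
          rw [h1', h2']
    _ ≤ ((v:ℝ)+1)^v * (2^v * I) := h3'
    _ = K * I := by rw [hKdef, mul_pow]; ring
  have hBC : B * C ≤ K * T^2 := by
    have hCinv : C⁻¹ * C = 1 := inv_mul_cancel₀ hC0.ne'
    calc B * C = (I:ℝ) * pr^(2*e) * ((((v:ℝ)+1) * n)^v) * (C⁻¹ * C) := by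
          rw [hBdef]; ring
    _ = (I:ℝ) * pr^(2*e) * ((((v:ℝ)+1) * n)^v) := by rw [hCinv, mul_one]
    _ ≤ (I:ℝ) * pr^(2*e) * (K * I) := mul_le_mul_of_nonneg_left hX
          (mul_nonneg (Nat.cast_nonneg I) (pow_nonneg h0.le _))
    _ = K * T^2 := by rw [hT2]; ring
  -- final algebra
  have hPB : P * B ≤ B := by
    calc P * B ≤ 1 * B := mul_le_mul_of_nonneg_right hP1 hB0
    _ = B := one_mul B
  have hmain' : T^2 ≤ P * T^2 + P * B := by
    rw [← mul_add]
    exact hmain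
  have h4 : T^2 * (1 - P) ≤ B := by
    have hex : T^2 * (1 - P) = T^2 - P * T^2 := by ring
    linarith
  have h5 : (1 - P) * C ≤ K := by
    have h6 : T^2 * ((1 - P) * C) ≤ T^2 * K := by
      calc T^2 * ((1 - P) * C) = (T^2 * (1 - P)) * C := by ring
      _ ≤ B * C := mul_le_mul_of_nonneg_right h4 hC0.le
      _ ≤ K * T^2 := hBC
      _ = T^2 * K := by ring
    exact le_of_mul_le_mul_left h6 hT2pos
  have h7 : 1 - P ≤ K / C := by
    rw [le_div_iff₀ hC0]
    exact h5
  linarith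

lemma part_two (hE : Gp.edgeSet.Nonempty) (p : ℕ → ℝ) (hp : ∀ n, 0 ≤ p n ∧ p n ≤ 1)
    (h : (fun n : ℕ => (n : ℝ) ^ (-(1 / maxDensity Gp))) =o[atTop] p) :
    Tendsto (fun n : ℕ => probPred n (p n) (fun Γ => ContainsCopy Gp Γ))
      atTop (nhds 1) := by
  classical
  set v := Fintype.card W with hvdef
  set K : ℝ := (2 * ((v:ℝ)+1))^v with hKdef
  have hK0 : 0 < K := by positivity
  rw [Metric.tendsto_nhds]
  intro ε hε
  set C : ℝ := K/ε + 1 with hCdef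
  have hC1 : 1 ≤ C := by
    rw [hCdef]
    have : 0 ≤ K/ε := by positivity
    linarith
  have hC0 : (0:ℝ) < C := lt_of_lt_of_le one_pos hC1
  have hKC : K/C < ε := by
    rw [div_lt_iff₀ hC0]
    have hεC : ε * C = K + ε := by
      rw [hCdef]
      field_simp
    rw [hεC]
    linarith
  have hCinv : (0:ℝ) < C⁻¹ := by positivity
  have hev1 : ∀ᶠ n : ℕ in atTop, C * (n:ℝ) ^ (-(1 / maxDensity Gp)) ≤ p n := by
    filter_upwards [h.def hCinv] with n hn
    rw [Real.norm_eq_abs, Real.norm_eq_abs,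
      abs_of_nonneg (Real.rpow_nonneg (Nat.cast_nonneg n) _),
      abs_of_nonneg (hp n).1] at hn
    calc C * (n:ℝ) ^ (-(1 / maxDensity Gp)) ≤ C * (C⁻¹ * p n) :=
          mul_le_mul_of_nonneg_left hn hC0.le
    _ = p n := by
        rw [← mul_assoc, mul_inv_cancel₀ hC0.ne', one_mul]
  filter_upwards [hev1, eventually_ge_atTop (max 1 (2*v))] with n h1 h2
  have hn1 : 1 ≤ n := le_trans (le_max_left _ _) h2
  have hn2 : 2*v ≤ n := le_trans (le_max_right _ _) h2
  have hnpos : (0:ℝ) < (n:ℝ) := by exact_mod_cast Nat.lt_of_lt_of_le Nat.zero_lt_one hn1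
  have hpn0 : 0 < p n :=
    lt_of_lt_of_le (mul_pos hC0 (Real.rpow_pos_of_pos hnpos _)) h1
  have hmb := main_bound Gp hE hpn0 (hp n).2 hC1 h1 hn2 hn1
  rw [probPred_eq_prob']
  have hP1 : prob' n (p n) (fun Γ => ContainsCopy Gp Γ) ≤ 1 :=
    prob'_le_one hpn0.le (hp n).2 _
  rw [Real.dist_eq, abs_lt]
  exact ⟨by linarith, by linarith⟩

end PartTwoMain

/-- The threshold for containing a copy of `G`: if `p = o(n^{-1/ρ^max(G)})` then a.a.s.
`G(n,p)` contains no copy of `G`; if `n^{-1/ρ^max(G)} = o(p)` then a.a.s. it contains one. -/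
theorem threshold_subgraph_containment {W : Type*} [Fintype W] (Gp : SimpleGraph W)
    (hE : Gp.edgeSet.Nonempty) (p : ℕ → ℝ) (hp : ∀ n, 0 ≤ p n ∧ p n ≤ 1) :
    ((p =o[atTop] fun n : ℕ => (n : ℝ) ^ (-(1 / maxDensity Gp))) →
      Tendsto (fun n : ℕ => probPred n (p n) (fun Γ => ContainsCopy Gp Γ))
        atTop (nhds 0)) ∧
    (((fun n : ℕ => (n : ℝ) ^ (-(1 / maxDensity Gp))) =o[atTop] p) →
      Tendsto (fun n : ℕ => probPred n (p n) (fun Γ => ContainsCopy Gp Γ))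
        atTop (nhds 1)) :=
  ⟨fun h => part_one Gp hE p hp h, fun h => part_two Gp hE p hp h⟩

end RandomGraphSpectra
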